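/- Let n be a natural number. For n-bit integers u, v, w, the equality u ⊕ v ⊕ w = u + v + w holds if and only if for every position i with 0 ≤ i ≤ n − 1 at most one of the bits u_i, v_i, w_i equals 1; moreover, the number of triples (u, v, w) of n-bit integers satisfying u ⊕ v ⊕ w = u + v + w equals 4^n. -/
import Mathlib

private lemma add_eq_xor_add_two_and : ∀ x y : ℕ, x + y = (x ^^^ y) + 2 * (x &&& y) := by
  intro x
  induction x using Nat.strong_induction_on with
  | _ x ih =>
    intro y
    rcases Nat.eq_zero_or_pos x with rfl | hx
    · simp
    have h := ih (x / 2) (Nat.div_lt_self hx one_lt_two) (y / 2)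
    have hx2 := Nat.div_add_mod x 2
    have hy2 := Nat.div_add_mod y 2
    have hxor := Nat.div_add_mod (x ^^^ y) 2
    have hand := Nat.div_add_mod (x &&& y) 2
    rw [Nat.xor_div_two] at hxor
    rw [Nat.and_div_two] at hand
    have m1 : (x ^^^ y) % 2 = 1 ↔ ¬ (x % 2 = 1 ↔ y % 2 = 1) := Nat.xor_mod_two_eq_one
    have m2 : (x &&& y) % 2 = 1 ↔ (x % 2 = 1 ∧ y % 2 = 1) := Nat.and_mod_two_eq_one
    have := Nat.mod_two_eq_zero_or_one x
    have := Nat.mod_two_eq_zero_or_one y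
    have := Nat.mod_two_eq_zero_or_one (x ^^^ y)
    have := Nat.mod_two_eq_zero_or_one (x &&& y)
    omega

private lemma land_eq_zero_iff (x y : ℕ) :
    x &&& y = 0 ↔ ∀ i, ¬(x.testBit i = true ∧ y.testBit i = true) := by
  constructor
  · intro h i hi
    have := Nat.testBit_and x y i
    rw [h, Nat.zero_testBit, hi.1, hi.2] at this
    simp at this
  · intro h
    apply Nat.eq_of_testBit_eq
    intro i
    have := h i
    rw [Nat.testBit_and, Nat.zero_testBit]
    cases hx : x.testBit i <;> cases hy : y.testBit i <;> simp_all

private lemma cond_iff (u v w : ℕ) :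
    u ^^^ v ^^^ w = u + v + w ↔
      ∀ i, (if u.testBit i then (1 : ℕ) else 0) +
           (if v.testBit i then (1 : ℕ) else 0) +
           (if w.testBit i then (1 : ℕ) else 0) ≤ 1 := by
  have h1 := add_eq_xor_add_two_and u v
  have h2 := add_eq_xor_add_two_and (u ^^^ v) w
  have key : u ^^^ v ^^^ w = u + v + w ↔ (u &&& v = 0 ∧ (u ^^^ v) &&& w = 0) := by omega
  rw [key, land_eq_zero_iff, land_eq_zero_iff]
  constructor
  · rintro ⟨ha, hb⟩ i
    have h1 := ha i
    have h2 := hb i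
    rw [Nat.testBit_xor] at h2
    cases hu : u.testBit i <;> cases hv : v.testBit i <;> cases hw : w.testBit i <;> simp_all
  · intro h
    constructor <;> intro i <;> have := h i <;>
      [skip; rw [Nat.testBit_xor]] <;>
      cases hu : u.testBit i <;> cases hv : v.testBit i <;> cases hw : w.testBit i <;> simp_all

private lemma split_iff (u v w : ℕ) :
    u ^^^ v ^^^ w = u + v + w ↔
      ((u / 2) ^^^ (v / 2) ^^^ (w / 2) = u / 2 + v / 2 + w / 2 ∧
       (u % 2) ^^^ (v % 2) ^^^ (w % 2) = u % 2 + v % 2 + w % 2) := by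
  rw [cond_iff, cond_iff, cond_iff]
  have hm0 : ∀ x : ℕ, (x % 2).testBit 0 = x.testBit 0 := by
    intro x; simp [Nat.testBit_zero, Nat.mod_mod_of_dvd x dvd_rfl]
  have hms : ∀ x i : ℕ, (x % 2).testBit (i + 1) = false := by
    intro x i
    have : (2:ℕ) ≤ 2 ^ (i+1) := Nat.le_self_pow (Nat.succ_ne_zero i) 2
    exact Nat.testBit_eq_false_of_lt (lt_of_lt_of_le (Nat.mod_lt x two_pos) this)
  constructor
  · intro h
    refine ⟨fun i => ?_, fun i => ?_⟩
    · simpa [Nat.testBit_div_two] using h (i + 1)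
    · match i with
      | 0 => simpa [hm0] using h 0
      | i + 1 => simp [hms]
  · rintro ⟨h1, h2⟩ i
    match i with
    | 0 => simpa [hm0] using h2 0
    | i + 1 => simpa [Nat.testBit_div_two] using h1 i

private lemma card_T : ∀ n : ℕ,
    ((Finset.range (2 ^ n) ×ˢ Finset.range (2 ^ n) ×ˢ Finset.range (2 ^ n)).filter
      (fun t : ℕ × ℕ × ℕ => t.1 ^^^ t.2.1 ^^^ t.2.2 = t.1 + t.2.1 + t.2.2)).card = 4 ^ n := by
  intro n
  induction n with
  | zero => decide
  | succ n ih =>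
    have hT1 : ((Finset.range 2 ×ˢ Finset.range 2 ×ˢ Finset.range 2).filter
      (fun t : ℕ × ℕ × ℕ => t.1 ^^^ t.2.1 ^^^ t.2.2 = t.1 + t.2.1 + t.2.2)).card = 4 := by decide
    have h2 : (2:ℕ) ^ (n+1) = 2 * 2 ^ n := by ring
    rw [show (4:ℕ) ^ (n+1) = 4 ^ n * 4 from pow_succ 4 n, ← ih, ← hT1, ← Finset.card_product]
    refine Finset.card_bij'
      (fun t _ => ((t.1/2, t.2.1/2, t.2.2/2), (t.1%2, t.2.1%2, t.2.2%2)))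
      (fun p _ => (2*p.1.1 + p.2.1, (2*p.1.2.1 + p.2.2.1, 2*p.1.2.2 + p.2.2.2)))
      ?_ ?_ ?_ ?_
    · intro a ha
      simp only [Finset.mem_filter, Finset.mem_product, Finset.mem_range] at ha ⊢
      have hp := (split_iff a.1 a.2.1 a.2.2).mp ha.2
      exact ⟨⟨⟨by omega, by omega, by omega⟩, hp.1⟩, ⟨by omega, by omega, by omega⟩, hp.2⟩
    · intro b hb
      simp only [Finset.mem_filter, Finset.mem_product, Finset.mem_range] at hb ⊢
      obtain ⟨⟨⟨hx1, hx2, hx3⟩, hq⟩, ⟨hy1, hy2, hy3⟩, hm⟩ := hb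
      have e1 : (2*b.1.1 + b.2.1)/2 = b.1.1 := by omega
      have e2 : (2*b.1.2.1 + b.2.2.1)/2 = b.1.2.1 := by omega
      have e3 : (2*b.1.2.2 + b.2.2.2)/2 = b.1.2.2 := by omega
      have m1 : (2*b.1.1 + b.2.1)%2 = b.2.1 := by omega
      have m2 : (2*b.1.2.1 + b.2.2.1)%2 = b.2.2.1 := by omega
      have m3 : (2*b.1.2.2 + b.2.2.2)%2 = b.2.2.2 := by omega
      refine ⟨⟨by omega, by omega, by omega⟩, ?_⟩
      apply (split_iff _ _ _).mpr
      rw [e1, e2, e3, m1, m2, m3]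
      exact ⟨hq, hm⟩
    · intro a ha
      obtain ⟨x, y, z⟩ := a
      simp only [Prod.mk.injEq]
      omega
    · intro b hb
      obtain ⟨⟨x1, x2, x3⟩, y1, y2, y3⟩ := b
      simp only [Finset.mem_filter, Finset.mem_product, Finset.mem_range] at hb
      obtain ⟨⟨⟨hx1, hx2, hx3⟩, hq⟩, ⟨hy1, hy2, hy3⟩, hm⟩ := hb
      simp only [Prod.mk.injEq]
      omega

/-- For `n`-bit integers `u, v, w`, `u ^^^ v ^^^ w = u + v + w` iff at most one of
the bits `u_i, v_i, w_i` equals 1 for each `i < n`; there are `4^n` such triples. -/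
theorem xor_three_eq_add_iff_and_card (n : ℕ) :
    (∀ u v w : ℕ, u < 2 ^ n → v < 2 ^ n → w < 2 ^ n →
      (u ^^^ v ^^^ w = u + v + w ↔
        ∀ i < n,
          (if u.testBit i then (1 : ℕ) else 0) +
          (if v.testBit i then (1 : ℕ) else 0) +
          (if w.testBit i then (1 : ℕ) else 0) ≤ 1)) ∧
    ((Finset.range (2 ^ n) ×ˢ Finset.range (2 ^ n) ×ˢ Finset.range (2 ^ n)).filter
      (fun t : ℕ × ℕ × ℕ => t.1 ^^^ t.2.1 ^^^ t.2.2 = t.1 + t.2.1 + t.2.2)).card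
      = 4 ^ n := by
  refine ⟨?_, card_T n⟩
  intro u v w hu hv hw
  rw [cond_iff]
  constructor
  · intro h i _
    exact h i
  · intro h i
    by_cases hi : i < n
    · exact h i hi
    · have hb : ∀ x : ℕ, x < 2 ^ n → x.testBit i = false := fun x hx =>
        Nat.testBit_eq_false_of_lt (lt_of_lt_of_le hx
          (Nat.pow_le_pow_right (by norm_num) (le_of_not_gt hi)))
      simp [hb u hu, hb v hv, hb w hw]
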